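/- If w ∈ S_n is a permutation at which Υ attains its maximum over S_n (i.e. Υ_w ≥ Υ_v for all v ∈ S_n), then maj(w) ≥ ℓ(w), where maj(w) = Σ_{i ∈ Des(w)} i is the major index of w. -/

import Mathlib

open Equiv Finset

namespace Schubert

variable {n : ℕ}

/-- Number of inversions of a permutation of `{0,...,n-1}`. -/
def len (w : Perm (Fin n)) : ℕ :=
  (Finset.univ.filter (fun p : Fin n × Fin n => p.1 < p.2 ∧ w p.2 < w p.1)).card

/-- One-based application: `app w i = w(i)` for `1 ≤ i ≤ n` (junk otherwise). -/
def app (w : Perm (Fin n)) (i : ℕ) : ℕ :=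
  if h : i - 1 < n then ((w ⟨i - 1, h⟩ : Fin n) : ℕ) + 1 else i

/-- The adjacent transposition `s_i` (one-based), swapping positions `i` and `i+1`. -/
def s (n : ℕ) (i : ℕ) : Perm (Fin n) :=
  if h : 1 ≤ i ∧ i < n then Equiv.swap ⟨i - 1, by omega⟩ ⟨i, h.2⟩ else 1

/-- The transposition `t_(a,b)` (one-based), swapping positions `a` and `b`. -/
def t (n : ℕ) (a b : ℕ) : Perm (Fin n) :=
  if h : 1 ≤ a ∧ a ≤ n ∧ 1 ≤ b ∧ b ≤ n then
    Equiv.swap ⟨a - 1, by omega⟩ ⟨b - 1, by omega⟩ else 1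

/-- The longest permutation `w_0 = (n, n-1, ..., 1)`. -/
def w0 (n : ℕ) : Perm (Fin n) where
  toFun i := ⟨n - 1 - i.val, by have := i.isLt; omega⟩
  invFun i := ⟨n - 1 - i.val, by have := i.isLt; omega⟩
  left_inv i := by have := i.isLt; apply Fin.ext; show n - 1 - (n - 1 - i.val) = i.val; omega
  right_inv i := by have := i.isLt; apply Fin.ext; show n - 1 - (n - 1 - i.val) = i.val; omega

/-- Descent set (one-based): `Des(w) = {i ∈ {1,...,n-1} : w(i) > w(i+1)}`. -/
def des (w : Perm (Fin n)) : Finset ℕ :=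
  (Finset.Icc 1 (n - 1)).filter (fun i => app w (i + 1) < app w i)

/-- Major index. -/
def maj (w : Perm (Fin n)) : ℕ := ∑ i ∈ des w, i

open Classical in
/-- The principal Schubert specialization
`Υ_w = 𝔖_w(1,...,1) = (1/ℓ(w)!) ∑_{(a_1,...,a_{ℓ(w)}) ∈ R(w)} a_1 ⋯ a_{ℓ(w)}`,
where a reduced word for `w` is a word of length `ℓ(w)` in letters `1,...,n-1`
whose product of adjacent transpositions is `w`. -/
noncomputable def Upsilon (w : Perm (Fin n)) : ℚ :=
  (∑ f : Fin (len w) → Fin (n - 1),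
      if (List.ofFn (fun j => s n ((f j : ℕ) + 1))).prod = w then
        ∏ j, ((f j : ℚ) + 1)
      else 0)
    / (len w).factorial


lemma swap_order {a b : Fin n} (hab : (a:ℕ)+1 = (b:ℕ)) {p q : Fin n}
    (hpq : p < q) (hne : ¬(p = a ∧ q = b)) :
    Equiv.swap a b p < Equiv.swap a b q := by
  have hltpq : (p:ℕ) < (q:ℕ) := hpq
  rw [Fin.lt_def]
  rw [Equiv.swap_apply_def, Equiv.swap_apply_def]
  have hab' : a ≠ b := by intro h; rw [h] at hab; omega
  split_ifs with h1 h2 h3 h4 h5 h6 h7 h8 <;>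
    simp_all [Fin.ext_iff] <;> omega

lemma len_mul_swap {v : Perm (Fin n)} {a b : Fin n} (hab : (a:ℕ)+1 = (b:ℕ))
    (h : v a < v b) : len (v * Equiv.swap a b) = len v + 1 := by
  classical
  set σ := Equiv.swap a b with hσ
  have hab' : a < b := by rw [Fin.lt_def]; omega
  set A := Finset.univ.filter (fun p : Fin n × Fin n => p.1 < p.2 ∧ v p.2 < v p.1) with hA
  set A' := Finset.univ.filter
    (fun p : Fin n × Fin n => p.1 < p.2 ∧ (v * σ) p.2 < (v * σ) p.1) with hA'
  have hmem : (a, b) ∉ A := by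
    simp only [hA, mem_filter, mem_univ, true_and]
    rintro ⟨-, h2⟩; exact absurd h (not_lt.2 h2.le)
  have key : A'.card = (insert (a, b) A).card := by
    set ψ : Fin n × Fin n → Fin n × Fin n :=
      fun p => if σ p.1 < σ p.2 then (σ p.1, σ p.2) else (σ p.2, σ p.1) with hψ
    have hinv : ∀ p : Fin n × Fin n, p.1 < p.2 → ψ (ψ p) = p := by
      rintro ⟨p, q⟩ hpq
      simp only [hψ]
      by_cases h1 : σ p < σ q
      · rw [if_pos h1]
        simp only [hσ, Equiv.swap_apply_self]
        rw [if_pos hpq]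
      · rw [if_neg h1]
        simp only [hσ, Equiv.swap_apply_self]
        rw [if_neg (not_lt.2 hpq.le)]
    have hab2 : σ a = b := Equiv.swap_apply_left a b
    have hba : σ b = a := Equiv.swap_apply_right a b
    have hψab : ψ (a, b) = (a, b) := by
      simp only [hψ, hab2, hba]
      rw [if_neg (not_lt.2 hab'.le)]
    have habA' : (a, b) ∈ A' := by
      simp only [hA', mem_filter, mem_univ, true_and]
      refine ⟨hab', ?_⟩
      show v (σ b) < v (σ a)
      rw [hab2, hba]; exact h
    refine Finset.card_nbij' ψ ψ ?_ ?_ ?_ ?_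
    · rintro ⟨p, q⟩ hp
      simp only [Finset.mem_coe, hA', mem_filter, mem_univ, true_and] at hp
      by_cases hc : p = a ∧ q = b
      · rw [hc.1, hc.2, hψab]; exact Finset.mem_insert_self _ _
      · have ho := swap_order hab hp.1 hc
        have : ψ (p, q) = (σ p, σ q) := by simp only [hψ]; rw [if_pos ho]
        rw [this]
        refine Finset.mem_insert_of_mem ?_
        simp only [hA, mem_filter, mem_univ, true_and]
        exact ⟨ho, hp.2⟩
    · rintro ⟨p, q⟩ hp
      rcases Finset.mem_insert.1 hp with hc | hc
      · rw [show ((p,q) : Fin n × Fin n) = (a, b) from hc, hψab]; exact habA'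
      · simp only [hA, mem_filter, mem_univ, true_and] at hc
        have hne : ¬(p = a ∧ q = b) := by
          rintro ⟨rfl, rfl⟩
          exact absurd h (not_lt.2 hc.2.le)
        have ho := swap_order hab hc.1 hne
        have hq : ψ (p, q) = (σ p, σ q) := by simp only [hψ]; rw [if_pos ho]
        rw [hq]
        simp only [Finset.mem_coe, hA', mem_filter, mem_univ, true_and]
        refine ⟨ho, ?_⟩
        show v (σ (σ q)) < v (σ (σ p))
        simp only [hσ, Equiv.swap_apply_self]
        exact hc.2
    · rintro ⟨p, q⟩ hp
      simp only [Finset.mem_coe, hA', mem_filter, mem_univ, true_and] at hp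
      exact hinv _ hp.1
    · rintro ⟨p, q⟩ hp
      rcases Finset.mem_insert.1 hp with hc | hc
      · rw [show ((p,q) : Fin n × Fin n) = (a, b) from hc, hψab, hψab]
      · simp only [hA, mem_filter, mem_univ, true_and] at hc
        exact hinv _ hc.1
  rw [show len (v * σ) = A'.card from rfl, key, Finset.card_insert_of_notMem hmem]
  rfl

lemma len_one : len (1 : Perm (Fin n)) = 0 := by
  rw [len, Finset.card_eq_zero, Finset.filter_eq_empty_iff]
  rintro ⟨p, q⟩ -
  simp only [Perm.one_apply, not_and]
  exact fun h1 => not_lt.2 h1.le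

lemma s_mul_self (i : ℕ) : s n i * s n i = 1 := by
  rw [s]
  split_ifs with h
  · exact Equiv.swap_mul_self _ _
  · exact one_mul 1

lemma s_eq_swap {i : ℕ} (h1 : 1 ≤ i) (h2 : i < n) :
    s n i = Equiv.swap ⟨i - 1, by omega⟩ ⟨i, h2⟩ := by
  rw [s, dif_pos ⟨h1, h2⟩]

lemma len_mul_s_cases {w : Perm (Fin n)} {i : ℕ} (h1 : 1 ≤ i) (h2 : i < n) :
    (app w (i + 1) < app w i ∧ len (w * s n i) + 1 = len w) ∨
    (¬ app w (i + 1) < app w i ∧ len (w * s n i) = len w + 1) := by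
  have ha : i - 1 < n := by omega
  have hb : i + 1 - 1 < n := by omega
  set a : Fin n := ⟨i - 1, by omega⟩ with hadef
  set b : Fin n := ⟨i, h2⟩ with hbdef
  have hab : (a : ℕ) + 1 = (b : ℕ) := by simp only [hadef, hbdef]; omega
  have hs : s n i = Equiv.swap a b := s_eq_swap h1 h2
  have happ1 : app w i = (w a : ℕ) + 1 := by rw [app, dif_pos ha]
  have happ2 : app w (i + 1) = (w b : ℕ) + 1 := by
    rw [app, dif_pos hb]
    congr 2
  have hne : w a ≠ w b := by
    intro hc
    have : a = b := w.injective hc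
    rw [Fin.ext_iff] at this
    simp only [hadef, hbdef] at this
    omega
  rcases lt_or_gt_of_ne hne with hlt | hgt
  · right
    constructor
    · rw [happ1, happ2]
      have : (w a : ℕ) < (w b : ℕ) := hlt
      omega
    · rw [hs]; exact len_mul_swap hab hlt
  · left
    have hd : app w (i + 1) < app w i := by
      rw [happ1, happ2]
      have : (w b : ℕ) < (w a : ℕ) := hgt
      omega
    refine ⟨hd, ?_⟩
    have hv : (w * s n i) a < (w * s n i) b := by
      rw [hs]
      show w (Equiv.swap a b a) < w (Equiv.swap a b b)
      rw [Equiv.swap_apply_left, Equiv.swap_apply_right]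
      exact hgt
    have := len_mul_swap hab hv
    rw [← hs] at this
    rw [mul_assoc, s_mul_self, mul_one] at this
    omega

lemma len_mul_s_le (w : Perm (Fin n)) (i : ℕ) : len (w * s n i) ≤ len w + 1 := by
  by_cases h : 1 ≤ i ∧ i < n
  · rcases len_mul_s_cases (w := w) h.1 h.2 with ⟨-, h'⟩ | ⟨-, h'⟩ <;> omega
  · rw [s, dif_neg h, mul_one]; omega

lemma len_prod_le (l : List ℕ) : len ((l.map (s n)).prod) ≤ l.length := by
  induction l using List.reverseRecOn with
  | nil => simp [len_one]
  | append_singleton l x ih =>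
      rw [List.map_append, List.prod_append, List.map_singleton, List.prod_singleton,
        List.length_append]
      have := len_mul_s_le ((l.map (s n)).prod) x
      simp only [List.length_singleton]
      omega

open Classical in
noncomputable def S' (v : Perm (Fin n)) (m : ℕ) : ℚ :=
  ∑ f : Fin m → Fin (n - 1),
    if (List.ofFn (fun j => s n ((f j : ℕ) + 1))).prod = v then ∏ j, ((f j : ℚ) + 1) else 0

lemma Upsilon_eq (w : Perm (Fin n)) : Upsilon w = S' w (len w) / (len w).factorial := rfl

lemma S'_eq_zero {v : Perm (Fin n)} {m : ℕ} (h : m < len v) : S' v m = 0 := by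
  rw [S']
  refine Finset.sum_eq_zero fun f _ => ?_
  rw [if_neg]
  intro hc
  have hmap : (List.ofFn (fun j => s n ((f j : ℕ) + 1)))
      = ((List.ofFn (fun j : Fin m => (f j : ℕ) + 1)).map (s n)) := by
    rw [List.map_ofFn]; rfl
  have := len_prod_le (n := n) (List.ofFn (fun j : Fin m => (f j : ℕ) + 1))
  rw [← hmap, hc, List.length_ofFn] at this
  omega

lemma mul_s_eq_iff {u w : Perm (Fin n)} {i : ℕ} : u * s n i = w ↔ u = w * s n i := by
  constructor
  · intro h; rw [← h, mul_assoc, s_mul_self, mul_one]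
  · intro h; rw [h, mul_assoc, s_mul_self, mul_one]

lemma S'_succ (w : Perm (Fin n)) (m : ℕ) :
    S' w (m + 1) = ∑ x : Fin (n - 1), ((x : ℚ) + 1) * S' (w * s n ((x : ℕ) + 1)) m := by
  classical
  rw [S']
  rw [← Fintype.sum_equiv (Fin.snocEquiv (fun _ => Fin (n - 1)))
    (fun p => if (List.ofFn (fun j => s n (((Fin.snocEquiv (fun _ => Fin (n-1))) p j : ℕ) + 1))).prod = w then
        ∏ j, (((Fin.snocEquiv (fun _ => Fin (n-1))) p j : ℚ) + 1) else 0)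
    _ (fun p => rfl)]
  rw [Fintype.sum_prod_type]
  refine Finset.sum_congr rfl fun x _ => ?_
  rw [S', Finset.mul_sum]
  refine Finset.sum_congr rfl fun g _ => ?_
  have happ : ∀ j : Fin (m + 1), (Fin.snocEquiv (fun _ => Fin (n-1))) (x, g) j
      = (Fin.snoc g x : Fin (m+1) → Fin (n-1)) j := fun j => rfl
  have hlist : (List.ofFn (fun j : Fin (m+1) => s n (((Fin.snoc g x : Fin (m+1) → Fin (n-1)) j : ℕ) + 1)))
      = (List.ofFn (fun j : Fin m => s n ((g j : ℕ) + 1))).concat (s n ((x : ℕ) + 1)) := by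
    rw [List.ofFn_succ']
    congr 1
    · congr 1
      funext j
      rw [Fin.snoc_castSucc]
    · rw [Fin.snoc_last]
  have hprod : (∏ j : Fin (m+1), (((Fin.snoc g x : Fin (m+1) → Fin (n-1)) j : ℚ) + 1))
      = (∏ j : Fin m, ((g j : ℚ) + 1)) * ((x : ℚ) + 1) := by
    rw [Fin.prod_univ_castSucc]
    congr 1
    · exact Finset.prod_congr rfl fun j _ => by rw [Fin.snoc_castSucc]
    · rw [Fin.snoc_last]
  simp only [happ, hlist, hprod, List.prod_concat]
  by_cases h : (List.ofFn fun j : Fin m => s n ((g j : ℕ) + 1)).prod = w * s n ((x : ℕ) + 1)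
  · rw [if_pos h, if_pos (mul_s_eq_iff.2 h)]; ring
  · rw [if_neg h, if_neg (fun hc => h (mul_s_eq_iff.1 hc)), mul_zero]

lemma S'_succ' (w : Perm (Fin n)) (m : ℕ) :
    S' w (m + 1) = ∑ i ∈ Finset.Icc 1 (n - 1), (i : ℚ) * S' (w * s n i) m := by
  rw [S'_succ]
  rw [Fin.sum_univ_eq_sum_range (fun j => ((j : ℚ) + 1) * S' (w * s n (j + 1)) m)]
  refine Finset.sum_nbij' (fun j => j + 1) (fun i => i - 1) ?_ ?_ ?_ ?_ ?_
  · intro a ha; rw [Finset.mem_range] at ha; rw [Finset.mem_Icc]; omega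
  · intro a ha; rw [Finset.mem_Icc] at ha; rw [Finset.mem_range]; omega
  · intro a ha; rw [Finset.mem_range] at ha; omega
  · intro a ha; rw [Finset.mem_Icc] at ha; omega
  · intro a ha
    push_cast
    ring_nf

lemma Upsilon_one : Upsilon (1 : Perm (Fin n)) = 1 := by
  rw [Upsilon_eq, len_one]
  simp [S']

lemma S'_len (v : Perm (Fin n)) : S' v (len v) = Upsilon v * (len v).factorial := by
  rw [Upsilon_eq]
  field_simp

/-- if `Υ` attains its maximum over `S_n` at `w`, then
`maj(w) ≥ ℓ(w)`. -/
theorem maj_ge_len_of_max (n : ℕ) (w : Perm (Fin n))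
    (hmax : ∀ v : Perm (Fin n), Upsilon v ≤ Upsilon w) :
    len w ≤ maj w := by
  rcases h0 : len w with _ | m
  · exact Nat.zero_le _
  have hU1 : (1 : ℚ) ≤ Upsilon w := by
    have := hmax 1
    rwa [Upsilon_one] at this
  have hUpos : (0 : ℚ) < Upsilon w := lt_of_lt_of_le one_pos hU1
  have hdes_len : ∀ i ∈ des w, len (w * s n i) = m := by
    intro i hi
    rw [des, Finset.mem_filter, Finset.mem_Icc] at hi
    have h1 : 1 ≤ i := hi.1.1
    have h2 : i < n := by omega
    rcases len_mul_s_cases (w := w) h1 h2 with ⟨-, h'⟩ | ⟨hc, -⟩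
    · omega
    · exact absurd hi.2 hc
  have key : S' w (m + 1) = ∑ i ∈ des w, (i : ℚ) * S' (w * s n i) m := by
    rw [S'_succ']
    refine (Finset.sum_subset (Finset.filter_subset _ _) ?_).symm
    intro i hi hni
    rw [Finset.mem_Icc] at hi
    simp only [des, Finset.mem_filter, Finset.mem_Icc] at hni
    have hnd : ¬ app w (i + 1) < app w i := fun hc => hni ⟨⟨hi.1, hi.2⟩, hc⟩
    have h2 : i < n := by omega
    rcases len_mul_s_cases (w := w) hi.1 h2 with ⟨hc, -⟩ | ⟨-, h'⟩
    · exact absurd hc hnd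
    · rw [S'_eq_zero (by omega), mul_zero]
  have hSw : S' w (m + 1) = Upsilon w * (m + 1).factorial := by
    rw [← h0, S'_len, h0]
  have hbound : Upsilon w * (m + 1).factorial
      ≤ (maj w : ℚ) * (Upsilon w * m.factorial) := by
    rw [← hSw, key]
    have : (maj w : ℚ) * (Upsilon w * m.factorial)
        = ∑ i ∈ des w, (i : ℚ) * (Upsilon w * m.factorial) := by
      rw [← Finset.sum_mul, maj]
      push_cast
      ring
    rw [this]
    refine Finset.sum_le_sum fun i hi => ?_
    have hlen : len (w * s n i) = m := hdes_len i hi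
    have : S' (w * s n i) m = Upsilon (w * s n i) * m.factorial := by
      rw [← hlen, S'_len, hlen]
    rw [this]
    have hfac : (0 : ℚ) ≤ m.factorial := by positivity
    refine mul_le_mul_of_nonneg_left ?_ (by positivity)
    exact mul_le_mul_of_nonneg_right (hmax _) hfac
  have hmfac : (0 : ℚ) < m.factorial := by positivity
  have hfactor : ((m + 1).factorial : ℚ) = (m + 1) * m.factorial := by
    rw [Nat.factorial_succ]; push_cast; ring
  rw [hfactor] at hbound
  have hfin : ((m : ℚ) + 1) ≤ (maj w : ℚ) := by
    have h1 : ((m : ℚ) + 1) * (Upsilon w * m.factorial)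
        ≤ (maj w : ℚ) * (Upsilon w * m.factorial) := by
      calc ((m : ℚ) + 1) * (Upsilon w * m.factorial)
          = Upsilon w * ((m + 1) * m.factorial) := by ring
        _ ≤ _ := hbound
    exact le_of_mul_le_mul_right h1 (by positivity)
  have : (m + 1 : ℕ) ≤ maj w := by exact_mod_cast hfin
  omega


end Schubert
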